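/- Let σ > 0 and let μ satisfy μ₂(σ) < μ < μ₃(σ), where μ₂(σ) = 1/(σ + 4) and μ₃(σ) = (σ + 1)/(3σ + 4). Then the fully symmetric convergence–divergence game has exactly three equilibria in the unit square: {(x,y) ∈ [0,1] × [0,1] : F₁(x,y) = 0 and F₂(x,y) = 0} = {(1/2, 1/2), (1/2 + δ̃(σ,μ), 1/2 − δ̃(σ,μ)), (1/2 − δ̃(σ,μ), 1/2 + δ̃(σ,μ))}, where δ̃(σ,μ) = √(−(3σ² + 4σ)μ² − 2(σ² + 3σ + 2)μ + (σ + 1)²) / (2(σμ + σ + 1)). -/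
import Mathlib


noncomputable def F1 (σ μ x y : ℝ) : ℝ :=
  ((1 - x) - μ) * x * (x + σ * x * (1 - y)) - (x - μ) * (1 - x) * ((1 - x) + σ * (1 - x) * y)

noncomputable def F2 (σ μ x y : ℝ) : ℝ :=
  ((1 - y) - μ) * y * (y + σ * y * (1 - x)) - (y - μ) * (1 - y) * ((1 - y) + σ * (1 - y) * x)

noncomputable def deltaTilde (σ μ : ℝ) : ℝ :=
  Real.sqrt (-(3 * σ^2 + 4 * σ) * μ^2 - 2 * (σ^2 + 3 * σ + 2) * μ + (σ + 1)^2) /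
    (2 * (σ * μ + σ + 1))

lemma F2_swap (σ μ x y : ℝ) : F2 σ μ x y = F1 σ μ y x := by unfold F1 F2; ring

lemma F1_line (σ μ x : ℝ) :
    F1 σ μ x (1 - x) = 2 * (x - 1/2) * ((σ*μ+σ+1) * (x*(1-x)) - μ*(σ+1)) := by
  unfold F1; ring

set_option maxHeartbeats 1000000 in
theorem phase_II_three_equilibria (σ μ : ℝ) (hσ : 0 < σ)
    (hlo : 1 / (σ + 4) < μ) (hhi : μ < (σ + 1) / (3 * σ + 4)) :
    {p : ℝ × ℝ | p ∈ Set.Icc (0:ℝ) 1 ×ˢ Set.Icc (0:ℝ) 1 ∧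
        F1 σ μ p.1 p.2 = 0 ∧ F2 σ μ p.1 p.2 = 0} =
      {(1/2, 1/2),
       (1/2 + deltaTilde σ μ, 1/2 - deltaTilde σ μ),
       (1/2 - deltaTilde σ μ, 1/2 + deltaTilde σ μ)} := by
  have hσ4 : (0:ℝ) < σ + 4 := by linarith
  have hμ0 : 0 < μ := lt_trans (by positivity) hlo
  have hlo' : 1 < (σ + 4) * μ := by
    rw [div_lt_iff₀ hσ4] at hlo; linarith
  have hc : 0 < σ*μ+σ+1 := by positivity
  have h34 : (0:ℝ) < 3*σ+4 := by linarith
  have hhi' : μ * (3*σ+4) < σ + 1 := by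
    rw [lt_div_iff₀ h34] at hhi; linarith
  have hdisc : 0 < -(3 * σ^2 + 4 * σ) * μ^2 - 2 * (σ^2 + 3 * σ + 2) * μ + (σ + 1)^2 := by
    have : -(3 * σ^2 + 4 * σ) * μ^2 - 2 * (σ^2 + 3 * σ + 2) * μ + (σ + 1)^2
        = (σ*μ+σ+1) * ((σ+1) - μ*(3*σ+4)) := by ring
    rw [this]
    exact mul_pos hc (by linarith)
  set δ := deltaTilde σ μ with hδdef
  have hδ0 : 0 ≤ δ := by
    rw [hδdef]; unfold deltaTilde; positivity
  have hδ2 : (σ*μ+σ+1) * δ^2 = (σ*μ+σ+1)/4 - μ*(σ+1) := by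
    rw [hδdef]; unfold deltaTilde
    rw [div_pow, Real.sq_sqrt hdisc.le]
    field_simp
    ring
  have hδlt : δ < 1/2 := by
    nlinarith [mul_pos hμ0 (show (0:ℝ) < σ+1 by linarith), sq_nonneg (δ - 1/2),
      mul_pos hc (mul_pos hμ0 hμ0)]
  ext ⟨x, y⟩
  simp only [Set.mem_setOf_eq, Set.mem_insert_iff, Set.mem_singleton_iff, Set.mem_prod,
    Set.mem_Icc, Prod.mk.injEq]
  constructor
  · rintro ⟨⟨⟨hx0, hx1⟩, hy0, hy1⟩, h1, h2⟩
    have hsum : F1 σ μ x y + F2 σ μ x y =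
        (x + y - 1) * (-2*μ + (1 - σ*μ)*(x+y)*(2-(x+y))/2 - (3+2*σ+σ*μ)*(x-y)^2/2) := by
      unfold F1 F2; ring
    have hQneg : (-2*μ + (1 - σ*μ)*(x+y)*(2-(x+y))/2 - (3+2*σ+σ*μ)*(x-y)^2/2) < 0 := by
      have h3s : (0:ℝ) ≤ 3 + 2*σ + σ*μ := by nlinarith
      rcases le_or_gt (σ*μ) 1 with h | h
      · linarith [mul_nonneg (show (0:ℝ) ≤ 1 - σ*μ by linarith) (sq_nonneg (x+y-1)),
          mul_nonneg h3s (sq_nonneg (x-y))]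
      · have ht : (0:ℝ) ≤ (x+y)*(2-(x+y)) :=
          mul_nonneg (by linarith) (by linarith)
        linarith [mul_nonneg (show (0:ℝ) ≤ σ*μ - 1 by linarith) ht,
          mul_nonneg h3s (sq_nonneg (x-y))]
    have hxy : x + y = 1 := by
      have h0 : (x + y - 1) * (-2*μ + (1 - σ*μ)*(x+y)*(2-(x+y))/2 - (3+2*σ+σ*μ)*(x-y)^2/2) = 0 := by
        have h' := hsum; rw [h1, h2] at h'; linarith
      rcases mul_eq_zero.mp h0 with h | h
      · linarith
      · exact absurd h hQneg.ne
    have hy' : y = 1 - x := by linarith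
    subst hy'
    have hfac : 2 * (x - 1/2) * ((σ*μ+σ+1) * (x*(1-x)) - μ*(σ+1)) = 0 := by
      rw [← F1_line]; exact h1
    rcases mul_eq_zero.mp hfac with h | h
    · left
      have hx : x = 1/2 := by linarith [mul_eq_zero.mp (by linarith : (2:ℝ) * (x - 1/2) = 0)]
      constructor
      · linarith
      · rw [show x = 1/2 by linarith]; norm_num
    · have key : (x - 1/2 - δ) * (x - 1/2 + δ) = 0 := by
        have h3 : (σ*μ+σ+1) * ((x - 1/2 - δ) * (x - 1/2 + δ)) = 0 := by
          linear_combination (-1) * h - hδ2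
        exact (mul_eq_zero.mp h3).resolve_left (ne_of_gt hc)
      rcases mul_eq_zero.mp key with h4 | h4
      · right; left; constructor <;> linarith
      · right; right; constructor <;> linarith
  · rintro (⟨hx, hy⟩ | ⟨hx, hy⟩ | ⟨hx, hy⟩) <;> subst hx <;> subst hy
    · refine ⟨⟨⟨by norm_num, by norm_num⟩, by norm_num, by norm_num⟩, ?_, ?_⟩
      · unfold F1; ring
      · unfold F2; ring
    · refine ⟨⟨⟨by linarith, by linarith⟩, by linarith, by linarith⟩, ?_, ?_⟩
      · unfold F1; linear_combination (-2*δ) * hδ2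
      · rw [F2_swap]; unfold F1; linear_combination (2*δ) * hδ2
    · refine ⟨⟨⟨by linarith, by linarith⟩, by linarith, by linarith⟩, ?_, ?_⟩
      · unfold F1; linear_combination (2*δ) * hδ2
      · rw [F2_swap]; unfold F1; linear_combination (-2*δ) * hδ2
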